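/- arXiv:math/0507208 — 3 statements merged into one kernel-verified Lean document; each statement's English description precedes it below -/
import Mathlib

section
/- Let C = ⟨a⟩ be cyclic of order 2^n, n ≥ 2, x = Σ α_i a^i ∈ F_2 C, and x* the image of x under the involution induced by a ↦ a^{-1}. Then xx* = χ(x) + Σ_{j=1}^{2^{n-1}-1} γ_j (a^j + a^{-j}), where γ_j = Σ_{i=0}^{2^n-1} α_i α_{i-j mod 2^n}; in particular the coefficient of a^{2^{n-1}} in xx* is 0 and the coefficient of 1 is χ(x). -/
open MonoidAlgebra Finset

noncomputable section

/-- The cyclic group of order `2^n`, written multiplicatively. -/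
abbrev Cgrp (n : ℕ) : Type := Multiplicative (ZMod (2 ^ n))

/-- The group algebra `F₂C` of the cyclic group of order `2^n` over the field of two elements. -/
abbrev FC (n : ℕ) : Type := MonoidAlgebra (ZMod 2) (Cgrp n)

/-- The augmentation map `χ : F₂C → F₂`. -/
def aug (n : ℕ) : FC n →ₐ[ZMod 2] ZMod 2 :=
  MonoidAlgebra.lift (ZMod 2) (ZMod 2) (Cgrp n) 1

/-- The generator `a` of the cyclic group `C`. -/
def agen (n : ℕ) : Cgrp n := Multiplicative.ofAdd (1 : ZMod (2 ^ n))

/-- The generator `a` viewed inside the group algebra `F₂C`. -/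
def A (n : ℕ) : FC n := MonoidAlgebra.of (ZMod 2) (Cgrp n) (agen n)

/-- Group elements of `C` as elements of the group algebra. -/
def Gel (n : ℕ) (i : ZMod (2 ^ n)) : FC n :=
  MonoidAlgebra.of (ZMod 2) (Cgrp n) (Multiplicative.ofAdd i)

/-- The involution `*` of `F₂C` induced by `a ↦ a⁻¹`. -/
def starOne (n : ℕ) : FC n ≃ₐ[ZMod 2] FC n :=
  MonoidAlgebra.domCongr (ZMod 2) (ZMod 2) (MulEquiv.inv (Cgrp n))

/-- The scalar `2^(n-1) - 1` in `ZMod (2^n)`. -/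
def cf (n : ℕ) : ZMod (2 ^ n) := 2 ^ (n - 1) - 1

lemma two_pow_zmod (n : ℕ) : ((2 : ZMod (2 ^ n))) ^ n = 0 := by
  have h : ((2 ^ n : ℕ) : ZMod (2 ^ n)) = 0 := ZMod.natCast_self _
  push_cast at h
  exact h

lemma cf_sq (n : ℕ) (hn : 2 ≤ n) : cf n * cf n = 1 := by
  have h0 := two_pow_zmod n
  have e1 : (2 : ZMod (2 ^ n)) ^ (n - 1) * 2 ^ (n - 1) = 0 := by
    rw [← pow_add]
    have h : n - 1 + (n - 1) = n + (n - 2) := by omega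
    rw [h, pow_add, h0, zero_mul]
  have e2 : (2 : ZMod (2 ^ n)) * 2 ^ (n - 1) = 0 := by
    have h : (2 : ZMod (2 ^ n)) * 2 ^ (n - 1) = 2 ^ (n - 1 + 1) := (pow_succ' 2 (n-1)).symm
    rw [h]
    have h' : n - 1 + 1 = n := by omega
    rw [h', h0]
  have key : cf n * cf n = 2 ^ (n - 1) * 2 ^ (n - 1) - 2 * 2 ^ (n - 1) + 1 := by
    unfold cf; ring
  rw [key, e1, e2]; ring

/-- The automorphism `z ↦ (2^(n-1)-1)·z` of `ZMod (2^n)`. -/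
def thetaAdd (n : ℕ) (hn : 2 ≤ n) : ZMod (2 ^ n) ≃+ ZMod (2 ^ n) where
  toFun z := cf n * z
  invFun z := cf n * z
  left_inv z := by show cf n * (cf n * z) = z; rw [← mul_assoc, cf_sq n hn, one_mul]
  right_inv z := by show cf n * (cf n * z) = z; rw [← mul_assoc, cf_sq n hn, one_mul]
  map_add' x y := mul_add _ _ _

/-- The automorphism `a ↦ a^(2^(n-1)-1)` of `C`. -/
def theta (n : ℕ) (hn : 2 ≤ n) : Cgrp n ≃* Cgrp n :=
  AddEquiv.toMultiplicative (thetaAdd n hn)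

/-- The involution `⊛` of `F₂C` induced by `a ↦ a^(2^(n-1)-1)`. -/
def starTwo (n : ℕ) (hn : 2 ≤ n) : FC n ≃ₐ[ZMod 2] FC n :=
  MonoidAlgebra.domCongr (ZMod 2) (ZMod 2) (theta n hn)

/-- The group `V(F₂C)` of normalized units, as a subgroup of the unit group of `F₂C`. -/
def Vgrp (n : ℕ) : Subgroup (FC n)ˣ where
  carrier := {u | aug n (↑u : FC n) = 1}
  one_mem' := by simp [Set.mem_setOf_eq]
  mul_mem' := by
    intro u v hu hv
    simp only [Set.mem_setOf_eq, Units.val_mul, map_mul] at *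
    rw [hu, hv, one_mul]
  inv_mem' := by
    intro u hu
    simp only [Set.mem_setOf_eq] at *
    have h : aug n ((↑u : FC n) * (↑u⁻¹ : FC n)) = 1 := by
      rw [Units.mul_inv, map_one]
    rw [map_mul, hu, one_mul] at h
    exact h

/-- The sum `Ĉ` of all elements of `C` inside the group algebra. -/
def hatC (n : ℕ) : FC n := ∑ g : Cgrp n, MonoidAlgebra.of (ZMod 2) (Cgrp n) g

/-- The sum `Ĉ²` of all elements of the subgroup `C²` of squares. -/
def hatCsq (n : ℕ) : FC n :=
  ∑ g ∈ Finset.image (fun h : Cgrp n => h * h) Finset.univ,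
    MonoidAlgebra.of (ZMod 2) (Cgrp n) g

/-- The subspace `F₂C²` of `F₂C` spanned by the subgroup of squares. -/
def sqSpan (n : ℕ) : Submodule (ZMod 2) (FC n) :=
  Submodule.span (ZMod 2) (Set.range fun g : Cgrp n => MonoidAlgebra.of (ZMod 2) (Cgrp n) (g * g))

lemma hatC_mul_hatC (n : ℕ) (hn : 1 ≤ n) : hatC n * hatC n = 0 := by
  classical
  unfold hatC
  rw [Finset.sum_mul_sum]
  have h1 : ∀ g : Cgrp n,
      ∑ h : Cgrp n, MonoidAlgebra.of (ZMod 2) (Cgrp n) g * MonoidAlgebra.of (ZMod 2) (Cgrp n) h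
        = hatC n := by
    intro g
    have h2 : ∀ h : Cgrp n,
        MonoidAlgebra.of (ZMod 2) (Cgrp n) g * MonoidAlgebra.of (ZMod 2) (Cgrp n) h
          = MonoidAlgebra.of (ZMod 2) (Cgrp n) (g * h) := by
      intro h; rw [map_mul]
    unfold hatC
    calc ∑ h : Cgrp n, MonoidAlgebra.of (ZMod 2) (Cgrp n) g * MonoidAlgebra.of (ZMod 2) (Cgrp n) h
        = ∑ h : Cgrp n, MonoidAlgebra.of (ZMod 2) (Cgrp n) (g * h) := by
          exact Finset.sum_congr rfl fun h _ => h2 h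
      _ = ∑ h : Cgrp n, MonoidAlgebra.of (ZMod 2) (Cgrp n) h :=
          Fintype.sum_equiv (Equiv.mulLeft g) _ _ (fun h => rfl)
  calc (∑ g : Cgrp n, ∑ h : Cgrp n,
        MonoidAlgebra.of (ZMod 2) (Cgrp n) g * MonoidAlgebra.of (ZMod 2) (Cgrp n) h)
      = ∑ _g : Cgrp n, hatC n := Finset.sum_congr rfl fun g _ => h1 g
    _ = (Fintype.card (Cgrp n)) • hatC n := by rw [Finset.sum_const, Finset.card_univ]
    _ = 0 := by
        rw [← Nat.cast_smul_eq_nsmul (ZMod 2)]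
        have hc : ((Fintype.card (Cgrp n) : ℕ) : ZMod 2) = 0 := by
          have : Fintype.card (Cgrp n) = 2 ^ n := by simp [Cgrp, ZMod.card]
          rw [this]
          push_cast
          rw [show ((2:ZMod 2) = 0) from rfl, zero_pow (by omega)]
        rw [hc, zero_smul]

lemma add_self_FC (n : ℕ) (x : FC n) : x + x = 0 := by
  rw [← two_smul (ZMod 2) x, show ((2:ZMod 2) = 0) from rfl, zero_smul]

/-- `1 + Ĉ` as a unit of `F₂C` (it is its own inverse). -/
def uC (n : ℕ) (hn : 1 ≤ n) : (FC n)ˣ :=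
  ⟨1 + hatC n, 1 + hatC n, by
    have h : (1 + hatC n) * (1 + hatC n) = 1 + (hatC n + hatC n) + hatC n * hatC n := by ring
    rw [h, add_self_FC, hatC_mul_hatC n hn, add_zero, add_zero], by
    have h : (1 + hatC n) * (1 + hatC n) = 1 + (hatC n + hatC n) + hatC n * hatC n := by ring
    rw [h, add_self_FC, hatC_mul_hatC n hn, add_zero, add_zero]⟩


def gam (n : ℕ) (α : ZMod (2 ^ n) → ZMod 2) (z : ZMod (2 ^ n)) : ZMod 2 :=
  ∑ i : ZMod (2 ^ n), α i * α (i - z)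

lemma xxstar_apply (n : ℕ) (α : ZMod (2 ^ n) → ZMod 2) (z : ZMod (2 ^ n)) :
    ((∑ i : ZMod (2 ^ n), α i • Gel n i) * starOne n (∑ i : ZMod (2 ^ n), α i • Gel n i)).coeff
      (Multiplicative.ofAdd z) = gam n α z := by
  classical
  have hx : (∑ i : ZMod (2 ^ n), α i • Gel n i)
      = ∑ i : ZMod (2 ^ n), MonoidAlgebra.single (Multiplicative.ofAdd i) (α i) := by
    refine Finset.sum_congr rfl fun i _ => ?_
    simp [Gel, MonoidAlgebra.of_apply, MonoidAlgebra.smul_single']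
  have hstar : starOne n (∑ i : ZMod (2 ^ n), α i • Gel n i)
      = ∑ i : ZMod (2 ^ n), MonoidAlgebra.single (Multiplicative.ofAdd (-i)) (α i) := by
    rw [hx, map_sum]
    refine Finset.sum_congr rfl fun i _ => ?_
    simp [starOne, MonoidAlgebra.domCongr_single]
  rw [hstar, hx, Finset.sum_mul_sum]
  simp only [MonoidAlgebra.single_mul_single, ← ofAdd_add]
  rw [gam]
  rw [MonoidAlgebra.coeff_sum, Finsupp.finset_sum_apply]
  refine Finset.sum_congr rfl fun i _ => ?_
  rw [MonoidAlgebra.coeff_sum, Finsupp.finset_sum_apply]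
  simp only [MonoidAlgebra.coeff_single, Finsupp.single_apply, Multiplicative.ofAdd.injective.eq_iff]
  have h : ∀ x : ZMod (2 ^ n), (i + -x = z) = (x = i - z) := by
    intro x
    refine propext ⟨fun h => ?_, fun h => ?_⟩
    · rw [← h]; ring
    · rw [h]; ring
  simp only [h]
  rw [Finset.sum_ite_eq' Finset.univ (i - z) (fun x => α i * α x)]
  simp

lemma gam_neg (n : ℕ) (α : ZMod (2 ^ n) → ZMod 2) (z : ZMod (2 ^ n)) :
    gam n α (-z) = gam n α z := by
  unfold gam
  rw [← Fintype.sum_equiv (Equiv.subRight z) (fun i => α i * α (i - z))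
    (fun i => α i * α (i - -z))]
  intro i
  simp [Equiv.subRight, sub_sub_cancel, sub_neg_eq_add, mul_comm]

lemma gam_zero (n : ℕ) (α : ZMod (2 ^ n) → ZMod 2) :
    gam n α 0 = ∑ i : ZMod (2 ^ n), α i := by
  unfold gam
  refine Finset.sum_congr rfl fun i _ => ?_
  rw [sub_zero]
  have h : ∀ x : ZMod 2, x * x = x := by decide
  exact h (α i)

lemma gam_half (n : ℕ) (hn : 1 ≤ n) (α : ZMod (2 ^ n) → ZMod 2) :
    gam n α ((2 ^ (n - 1) : ℕ) : ZMod (2 ^ n)) = 0 := by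
  set m : ZMod (2 ^ n) := ((2 ^ (n - 1) : ℕ) : ZMod (2 ^ n)) with hm
  have h2m : m + m = 0 := by
    rw [hm, ← Nat.cast_add, ZMod.natCast_eq_zero_iff]
    rw [show 2 ^ (n - 1) + 2 ^ (n - 1) = 2 ^ n by
      rw [← two_mul, ← pow_succ']; congr 1; omega]
  have hm0 : m ≠ 0 := by
    rw [hm, Ne, ZMod.natCast_eq_zero_iff]
    intro h
    exact absurd (Nat.le_of_dvd (by positivity) h) (by
      have : 2 ^ (n - 1) < 2 ^ n := Nat.pow_lt_pow_right (by norm_num) (by omega)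
      omega)
  unfold gam
  refine Finset.sum_ninvolution (fun i => i - m) (fun i => ?_) (fun i _ => ?_)
    (fun i => Finset.mem_univ _) (fun i => ?_)
  · have : i - m - m = i := by
      have : i - m - m = i - (m + m) := by ring
      rw [this, h2m, sub_zero]
    rw [this, mul_comm]
    exact CharTwo.add_self_eq_zero _
  · intro h
    apply hm0
    have h' : i - m = i := h
    exact sub_eq_self.mp h'
  · show i - m - m = i
    have : i - m - m = i - (m + m) := by ring
    rw [this, h2m, sub_zero]

lemma Gel_apply (n : ℕ) (i z : ZMod (2 ^ n)) :
    (Gel n i).coeff (Multiplicative.ofAdd z) = if i = z then 1 else 0 := by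
  simp [Gel, MonoidAlgebra.of_apply, MonoidAlgebra.coeff_single, Finsupp.single_apply,
    Multiplicative.ofAdd.injective.eq_iff]

lemma one_apply' (n : ℕ) (z : ZMod (2 ^ n)) :
    (1 : FC n).coeff (Multiplicative.ofAdd z) = if (0 : ZMod (2 ^ n)) = z then 1 else 0 := by
  rw [MonoidAlgebra.one_def]
  have h : ((1 : Cgrp n) = Multiplicative.ofAdd z) = ((0 : ZMod (2 ^ n)) = z) := by
    rw [← ofAdd_zero]
    exact propext Multiplicative.ofAdd.injective.eq_iff
  simp [MonoidAlgebra.coeff_single, Finsupp.single_apply, h]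

lemma rhs_apply (n : ℕ) (α : ZMod (2 ^ n) → ZMod 2) (z : ZMod (2 ^ n)) :
    ((∑ i : ZMod (2 ^ n), α i) • (1 : FC n)
          + ∑ j ∈ Finset.Ico (1 : ℕ) (2 ^ (n - 1)),
              (∑ i : ZMod (2 ^ n), α i * α (i - (j : ZMod (2 ^ n))))
                • (Gel n (j : ZMod (2 ^ n)) + Gel n (-(j : ZMod (2 ^ n))))).coeff
      (Multiplicative.ofAdd z)
    = (∑ i : ZMod (2 ^ n), α i) * (if (0 : ZMod (2 ^ n)) = z then 1 else 0)
      + ∑ j ∈ Finset.Ico (1 : ℕ) (2 ^ (n - 1)),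
          (∑ i : ZMod (2 ^ n), α i * α (i - (j : ZMod (2 ^ n))))
            * ((if ((j : ℕ) : ZMod (2 ^ n)) = z then 1 else 0)
              + (if (-((j : ℕ) : ZMod (2 ^ n))) = z then (1 : ZMod 2) else 0)) := by
  rw [MonoidAlgebra.coeff_add, Finsupp.add_apply, MonoidAlgebra.coeff_smul, Finsupp.smul_apply,
    MonoidAlgebra.coeff_sum, Finsupp.finset_sum_apply]
  simp only [Finsupp.add_apply, Finsupp.smul_apply, smul_eq_mul, Gel_apply, one_apply', mul_add]
  congr 1
  apply Finset.sum_congr rfl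
  intro j _
  have e1 : ∀ (c : ZMod 2) (f g : FC n) (w : Cgrp n), (c • (f + g)).coeff w = c * f.coeff w + c * g.coeff w := by
    intro c f g w
    show c * (f.coeff w + g.coeff w) = _
    ring
  rw [e1]
  simp only [Gel_apply, mul_ite, mul_one, mul_zero]

lemma key (n : ℕ) (hn : 2 ≤ n) (α : ZMod (2 ^ n) → ZMod 2) (z : ZMod (2 ^ n)) :
    gam n α z
    = (∑ i : ZMod (2 ^ n), α i) * (if (0 : ZMod (2 ^ n)) = z then 1 else 0)
      + ∑ j ∈ Finset.Ico (1 : ℕ) (2 ^ (n - 1)),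
          (∑ i : ZMod (2 ^ n), α i * α (i - (j : ZMod (2 ^ n))))
            * ((if ((j : ℕ) : ZMod (2 ^ n)) = z then 1 else 0)
              + (if (-((j : ℕ) : ZMod (2 ^ n))) = z then (1 : ZMod 2) else 0)) := by
  haveI : NeZero (2 ^ n) := ⟨pow_ne_zero n two_ne_zero⟩
  have hNm : 2 ^ n = 2 * 2 ^ (n - 1) := by
    rw [← pow_succ']; congr 1; omega
  have hm2 : 2 ≤ 2 ^ (n - 1) := by
    calc 2 = 2 ^ 1 := rfl
    _ ≤ 2 ^ (n - 1) := Nat.pow_le_pow_right (by norm_num) (by omega)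
  have hvN : z.val < 2 ^ n := ZMod.val_lt z
  have hz : ((z.val : ℕ) : ZMod (2 ^ n)) = z := ZMod.natCast_zmod_val z
  have cond1 : ∀ j : ℕ, j < 2 ^ n → (((j : ℕ) : ZMod (2 ^ n)) = z ↔ j = z.val) := by
    intro j hj
    constructor
    · intro h
      rw [← h, ZMod.val_cast_of_lt hj]
    · intro h
      rw [h, hz]
  have cond2 : ∀ j : ℕ, ((-((j : ℕ) : ZMod (2 ^ n))) = z ↔ 2 ^ n ∣ j + z.val) := by
    intro j
    rw [neg_eq_iff_add_eq_zero]
    rw [show ((j : ZMod (2 ^ n)) + z = ((j + z.val : ℕ) : ZMod (2 ^ n))) by push_cast [hz]; ring]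
    exact ZMod.natCast_eq_zero_iff _ _
  have gamform : ∀ w : ZMod (2 ^ n), (∑ i : ZMod (2 ^ n), α i * α (i - w)) = gam n α w :=
    fun w => rfl
  by_cases h0 : z.val = 0
  · -- z = 0
    have hz0 : z = 0 := by rw [← hz, h0]; simp
    have hs : (∑ j ∈ Finset.Ico (1 : ℕ) (2 ^ (n - 1)),
          (∑ i : ZMod (2 ^ n), α i * α (i - (j : ZMod (2 ^ n))))
            * ((if ((j : ℕ) : ZMod (2 ^ n)) = z then 1 else 0)
              + (if (-((j : ℕ) : ZMod (2 ^ n))) = z then (1 : ZMod 2) else 0))) = 0 := by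
      refine Finset.sum_eq_zero fun j hj => ?_
      rw [Finset.mem_Ico] at hj
      rw [if_neg, if_neg]
      · ring
      · rw [cond2 j]
        intro hd
        have := Nat.le_of_dvd (by omega) hd
        omega
      · rw [cond1 j (by omega)]; omega
    rw [if_pos hz0.symm, hs, add_zero, mul_one, hz0, gam_zero]
  · have hzne : ¬ ((0 : ZMod (2 ^ n)) = z) := by
      intro h
      exact h0 (by rw [← h]; exact ZMod.val_zero)
    rw [if_neg hzne, mul_zero, zero_add]
    by_cases h1 : z.val < 2 ^ (n - 1)
    · -- case B
      rw [Finset.sum_eq_single_of_mem z.val (Finset.mem_Ico.mpr ⟨by omega, h1⟩)]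
      · rw [if_pos ((cond1 z.val hvN).mpr rfl), if_neg, gamform, hz, add_zero, mul_one]
        rw [cond2]
        intro hd
        have := Nat.le_of_dvd (by omega) hd
        omega
      · intro j hj hne
        rw [Finset.mem_Ico] at hj
        rw [if_neg, if_neg]
        · ring
        · rw [cond2]
          intro hd
          have := Nat.le_of_dvd (by omega) hd
          omega
        · rw [cond1 j (by omega)]; omega
    · by_cases h2 : z.val = 2 ^ (n - 1)
      · -- case C
        rw [Finset.sum_eq_zero]
        · rw [show z = ((2 ^ (n - 1) : ℕ) : ZMod (2 ^ n)) by rw [← hz, h2]]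
          rw [gam_half n (by omega) α]
        · intro j hj
          rw [Finset.mem_Ico] at hj
          rw [if_neg, if_neg]
          · ring
          · rw [cond2]
            intro hd
            have := Nat.le_of_dvd (by omega) hd
            omega
          · rw [cond1 j (by omega)]; omega
      · -- case D : m < v < N
        have hv : 2 ^ (n - 1) < z.val := by omega
        set j0 : ℕ := 2 ^ n - z.val with hj0
        have hj0mem : j0 ∈ Finset.Ico (1 : ℕ) (2 ^ (n - 1)) := Finset.mem_Ico.mpr ⟨by omega, by omega⟩
        rw [Finset.sum_eq_single_of_mem j0 hj0mem]
        · rw [if_neg, if_pos ((cond2 j0).mpr (by rw [hj0]; exact ⟨1, by omega⟩))]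
          · have hjz : ((j0 : ℕ) : ZMod (2 ^ n)) = -z := by
              have : ((j0 : ZMod (2 ^ n)) + z = 0) := by
                rw [show ((j0 : ZMod (2 ^ n)) + z = ((j0 + z.val : ℕ) : ZMod (2 ^ n))) by
                  push_cast [hz]; ring]
                rw [ZMod.natCast_eq_zero_iff]
                exact ⟨1, by omega⟩
              linear_combination this
            rw [gamform, hjz, gam_neg, zero_add, mul_one]
          · rw [cond1 j0 (by omega)]; omega
        · intro j hj hne
          rw [Finset.mem_Ico] at hj
          rw [if_neg, if_neg]
          · ring
          · rw [cond2]
            intro hd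
            have h2N : j + z.val < 2 * 2 ^ n := by omega
            have hpos : 0 < j + z.val := by omega
            rcases hd with ⟨c, hc⟩
            have hc0 : c ≠ 0 := by rintro rfl; omega
            have hc2 : c < 2 := by
              by_contra hcc
              push_neg at hcc
              have := Nat.mul_le_mul_left (2 ^ n) hcc
              omega
            have hc1 : c = 1 := by omega
            rw [hc1, mul_one] at hc
            omega
          · rw [cond1 j (by omega)]; omega

/-- For `x = Σ α_i a^i ∈ F₂C`, `C` cyclic of order `2^n`, `n ≥ 2`:
`x x* = χ(x)·1 + Σ_{j=1}^{2^(n-1)-1} γ_j (a^j + a^(-j))` with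
`γ_j = Σ_i α_i α_{i-j}`; in particular the coefficient of `a^(2^(n-1))` in `x x*`
is `0` and the coefficient of `1` is `χ(x)`. -/
theorem stmt6 (n : ℕ) (hn : 2 ≤ n) (α : ZMod (2 ^ n) → ZMod 2) :
    (∑ i : ZMod (2 ^ n), α i • Gel n i) * starOne n (∑ i : ZMod (2 ^ n), α i • Gel n i)
        = (∑ i : ZMod (2 ^ n), α i) • (1 : FC n)
          + ∑ j ∈ Finset.Ico (1 : ℕ) (2 ^ (n - 1)),
              (∑ i : ZMod (2 ^ n), α i * α (i - (j : ZMod (2 ^ n))))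
                • (Gel n (j : ZMod (2 ^ n)) + Gel n (-(j : ZMod (2 ^ n)))) ∧
    ((∑ i : ZMod (2 ^ n), α i • Gel n i) * starOne n (∑ i : ZMod (2 ^ n), α i • Gel n i)).coeff
        (Multiplicative.ofAdd ((2 ^ (n - 1) : ℕ) : ZMod (2 ^ n))) = 0 ∧
    ((∑ i : ZMod (2 ^ n), α i • Gel n i) * starOne n (∑ i : ZMod (2 ^ n), α i • Gel n i)).coeff
        (1 : Cgrp n) = ∑ i : ZMod (2 ^ n), α i := by
  refine ⟨?_, ?_, ?_⟩
  · refine MonoidAlgebra.coeff_injective (Finsupp.ext fun g => ?_)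
    have hg : g = Multiplicative.ofAdd (Multiplicative.toAdd g) := rfl
    rw [hg, xxstar_apply, rhs_apply]
    exact key n hn α (Multiplicative.toAdd g)
  · rw [xxstar_apply]
    exact gam_half n (by omega) α
  · rw [show (1 : Cgrp n) = Multiplicative.ofAdd (0 : ZMod (2 ^ n)) from rfl, xxstar_apply]
    exact gam_zero n α

end
end

section
/- Let C = ⟨a⟩ be cyclic of order 2^n, n ≥ 3, and ⊛ the involution of F_2 C induced by a ↦ a^{2^{n-1}-1}. For x = Σ α_i a^i, the coefficient of 1 in x x^⊛ is Σ_{i even} α_i and the coefficient of a^{2^{n-1}} in x x^⊛ is Σ_{i odd} α_i. -/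
open MonoidAlgebra Finset

noncomputable section

lemma zmod2_add_self' (x : ZMod 2) : x + x = 0 := by revert x; decide

lemma zmod2_mul_self (x : ZMod 2) : x * x = x := by revert x; decide

lemma cancel_sum (n : ℕ) (hn : 3 ≤ n) (β : ℕ → ZMod 2) (p : ℕ → Prop) [DecidablePred p]
    (hpres : ∀ j, p ((j + 2^(n-1)) % 2^n) ↔ p j) :
    ∑ j ∈ (Finset.range (2^n)).filter p, β ((j + 2^(n-1)) % 2^n) * β j = 0 := by
  have hHN : 2^(n-1) + 2^(n-1) = 2^n := by
    rw [← two_mul, ← pow_succ', show n-1+1 = n by omega]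
  have hH0 : 0 < 2^(n-1) := Nat.pow_pos (by omega)
  have hHlt : 2^(n-1) < 2^n := Nat.pow_lt_pow_right (by omega) (by omega)
  have hinv : ∀ j, j < 2^n → ((j + 2^(n-1)) % 2^n + 2^(n-1)) % 2^n = j := by
    intro j hj
    rw [Nat.mod_add_mod, show j + 2^(n-1) + 2^(n-1) = j + 2^n by omega,
      Nat.add_mod_right, Nat.mod_eq_of_lt hj]
  refine Finset.sum_involution (fun j _ => (j + 2^(n-1)) % 2^n) ?_ ?_ ?_ ?_
  · intro j hj
    simp only [mem_filter, mem_range] at hj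
    show β ((j + 2^(n-1)) % 2^n) * β j
        + β (((j + 2^(n-1)) % 2^n + 2^(n-1)) % 2^n) * β ((j + 2^(n-1)) % 2^n) = 0
    rw [hinv j hj.1, mul_comm (β ((j + 2^(n-1)) % 2^n))]
    exact zmod2_add_self' _
  · intro j hj _
    simp only [mem_filter, mem_range] at hj
    show (j + 2^(n-1)) % 2^n ≠ j
    rcases Nat.lt_or_ge (j + 2^(n-1)) (2^n) with hc | hc
    · rw [Nat.mod_eq_of_lt hc]; omega
    · rw [Nat.mod_eq_sub_mod hc, Nat.mod_eq_of_lt (by omega)]; omega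
  · intro j hj
    simp only [mem_filter, mem_range] at hj ⊢
    exact ⟨Nat.mod_lt _ (by positivity), (hpres j).mpr hj.2⟩
  · intro j hj
    simp only [mem_filter, mem_range] at hj
    exact hinv j hj.1

lemma pow_half_mul_even (n : ℕ) (hn : 1 ≤ n) (j : ℕ) (he : Even j) :
    (2 : ZMod (2^n)) ^ (n-1) * (j : ZMod (2^n)) = 0 := by
  obtain ⟨m, rfl⟩ := he
  have : ((2:ZMod (2^n)))^(n-1) * ((m + m : ℕ) : ZMod (2^n)) = ((2^n * m : ℕ) : ZMod (2^n)) := by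
    push_cast
    rw [show (m:ZMod (2^n)) + m = 2 * m by ring, ← mul_assoc, ← pow_succ,
      show n - 1 + 1 = n by omega]
  rw [this]; simp

lemma pow_half_mul_odd (n : ℕ) (hn : 1 ≤ n) (j : ℕ) (ho : Odd j) :
    (2 : ZMod (2^n)) ^ (n-1) * (j : ZMod (2^n)) = 2 ^ (n-1) := by
  obtain ⟨m, rfl⟩ := ho
  have h := pow_half_mul_even n hn (2*m) ⟨m, two_mul m⟩
  push_cast; push_cast at h
  rw [mul_add, h, mul_one, zero_add]

lemma half_add_half (n : ℕ) (hn : 1 ≤ n) :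
    (2 : ZMod (2^n)) ^ (n-1) + 2 ^ (n-1) = 0 := by
  have : (2:ZMod (2^n))^(n-1) + 2^(n-1) = 2^(n-1+1) := by ring
  rw [this, show n-1+1 = n by omega, two_pow_zmod]

lemma half_cast (n : ℕ) : ((2^(n-1) : ℕ) : ZMod (2^n)) = (2 : ZMod (2^n))^(n-1) := by
  push_cast; ring

lemma val0_even (n : ℕ) (hn : 3 ≤ n) (j : ℕ) (hj : j < 2^n) (he : Even j) :
    ((0 : ZMod (2^n)) - cf n * (j : ZMod (2^n))).val = j := by
  haveI : NeZero (2^n) := ⟨by positivity⟩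
  have h := pow_half_mul_even n (by omega) j he
  have : (0 : ZMod (2^n)) - cf n * (j : ZMod (2^n)) = (j : ZMod (2^n)) := by
    rw [cf, sub_mul, one_mul, h]; ring
  rw [this, ZMod.val_cast_of_lt hj]

lemma val0_odd (n : ℕ) (hn : 3 ≤ n) (j : ℕ) (hj : j < 2^n) (ho : Odd j) :
    ((0 : ZMod (2^n)) - cf n * (j : ZMod (2^n))).val = (j + 2^(n-1)) % 2^n := by
  haveI : NeZero (2^n) := ⟨by positivity⟩
  have h := pow_half_mul_odd n (by omega) j ho
  have hhh := half_add_half n (by omega)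
  have : (0 : ZMod (2^n)) - cf n * (j : ZMod (2^n)) = ((j + 2^(n-1) : ℕ) : ZMod (2^n)) := by
    rw [cf, sub_mul, one_mul, h]
    push_cast
    linear_combination -hhh
  rw [this, ZMod.val_natCast]

lemma valh_even (n : ℕ) (hn : 3 ≤ n) (j : ℕ) (hj : j < 2^n) (he : Even j) :
    ((((2^(n-1):ℕ)) : ZMod (2^n)) - cf n * (j : ZMod (2^n))).val = (j + 2^(n-1)) % 2^n := by
  haveI : NeZero (2^n) := ⟨by positivity⟩
  have h := pow_half_mul_even n (by omega) j he
  have : (((2^(n-1):ℕ)) : ZMod (2^n)) - cf n * (j : ZMod (2^n))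
      = ((j + 2^(n-1) : ℕ) : ZMod (2^n)) := by
    rw [half_cast, cf, sub_mul, one_mul, h]
    push_cast; ring
  rw [this, ZMod.val_natCast]

lemma valh_odd (n : ℕ) (hn : 3 ≤ n) (j : ℕ) (hj : j < 2^n) (ho : Odd j) :
    ((((2^(n-1):ℕ)) : ZMod (2^n)) - cf n * (j : ZMod (2^n))).val = j := by
  haveI : NeZero (2^n) := ⟨by positivity⟩
  have h := pow_half_mul_odd n (by omega) j ho
  have : (((2^(n-1):ℕ)) : ZMod (2^n)) - cf n * (j : ZMod (2^n)) = (j : ZMod (2^n)) := by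
    rw [half_cast, cf, sub_mul, one_mul, h]; ring
  rw [this, ZMod.val_cast_of_lt hj]

lemma parity_pres (n : ℕ) (hn : 3 ≤ n) (j : ℕ) :
    Even ((j + 2^(n-1)) % 2^n) ↔ Even j := by
  have hd : (2:ℕ) ∣ 2^n := dvd_pow_self 2 (by omega)
  have h1 : ((j + 2^(n-1)) % 2^n) % 2 = (j + 2^(n-1)) % 2 := Nat.mod_mod_of_dvd _ hd
  have h2 : (2:ℕ) ∣ 2^(n-1) := dvd_pow_self 2 (by omega)
  rw [Nat.even_iff, Nat.even_iff, h1]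
  omega

lemma smul_pow_eq_single (n : ℕ) (α : ℕ → ZMod 2) (i : ℕ) :
    α i • A n ^ i = MonoidAlgebra.single (Multiplicative.ofAdd ((i : ZMod (2^n)))) (α i) := by
  rw [A, ← map_pow, MonoidAlgebra.of_apply, MonoidAlgebra.smul_single]
  congr 1
  · show agen n ^ i = _
    rw [agen, ← ofAdd_nsmul]; congr 1; simp
  · simp

lemma coeff_formula (n : ℕ) (hn : 3 ≤ n) (α : ℕ → ZMod 2) (z : ZMod (2^n)) :
    ((∑ i ∈ Finset.range (2 ^ n), α i • A n ^ i) *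
        starTwo n (Nat.le_of_succ_le hn) (∑ i ∈ Finset.range (2 ^ n), α i • A n ^ i)).coeff
        (Multiplicative.ofAdd z)
      = ∑ j ∈ Finset.range (2 ^ n), α ((z - cf n * (j : ZMod (2^n))).val) * α j := by
  haveI : NeZero (2^n) := ⟨by positivity⟩
  have hstar : starTwo n (by omega : 2 ≤ n) (∑ i ∈ Finset.range (2 ^ n), α i • A n ^ i)
      = ∑ j ∈ Finset.range (2 ^ n),
          MonoidAlgebra.single (Multiplicative.ofAdd (cf n * (j : ZMod (2^n)))) (α j) := by
    rw [map_sum]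
    refine Finset.sum_congr rfl fun j _ => ?_
    rw [smul_pow_eq_single, starTwo, MonoidAlgebra.domCongr_single]
    rfl
  rw [hstar]
  conv_lhs => rw [show (∑ i ∈ Finset.range (2 ^ n), α i • A n ^ i)
      = ∑ i ∈ Finset.range (2 ^ n),
          MonoidAlgebra.single (Multiplicative.ofAdd ((i : ZMod (2^n)))) (α i) from
      Finset.sum_congr rfl fun i _ => smul_pow_eq_single n α i]
  rw [Finset.sum_mul_sum]
  simp only [MonoidAlgebra.single_mul_single, MonoidAlgebra.coeff_sum]
  rw [Finset.sum_apply']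
  rw [Finset.sum_congr rfl fun i _ => Finset.sum_apply' (Multiplicative.ofAdd z)]
  rw [Finset.sum_comm]
  refine Finset.sum_congr rfl fun j hj => ?_
  simp only [MonoidAlgebra.coeff_single, Finsupp.single_apply, ← ofAdd_add]
  rw [Finset.sum_eq_single ((z - cf n * (j : ZMod (2^n))).val)]
  · rw [if_pos]
    show Multiplicative.ofAdd (((((z - cf n * (j : ZMod (2^n))).val : ℕ)) : ZMod (2^n))
        + cf n * (j : ZMod (2^n))) = Multiplicative.ofAdd z
    rw [ZMod.natCast_zmod_val]
    congr 1
    ring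
  · intro i hi hne
    rw [if_neg]
    intro h
    apply hne
    have : ((i : ZMod (2^n))) = z - cf n * (j : ZMod (2^n)) := by
      have := Multiplicative.ofAdd.injective h
      linear_combination this
    rw [← this, ZMod.val_cast_of_lt (Finset.mem_range.mp hi)]
  · intro h
    exact absurd (Finset.mem_range.mpr (ZMod.val_lt _)) h

/-- For `C` cyclic of order `2^n`, `n ≥ 3`, and `x = Σ α_i a^i`, the coefficient of `1`
in `x x^⊛` is `Σ_{i even} α_i` and the coefficient of `a^(2^(n-1))` in `x x^⊛` is
`Σ_{i odd} α_i`. -/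
theorem stmt7 (n : ℕ) (hn : 3 ≤ n) (α : ℕ → ZMod 2) :
    ((∑ i ∈ Finset.range (2 ^ n), α i • A n ^ i) *
        starTwo n (by omega) (∑ i ∈ Finset.range (2 ^ n), α i • A n ^ i)).coeff (1 : Cgrp n)
      = ∑ i ∈ (Finset.range (2 ^ n)).filter (fun i => Even i), α i ∧
    ((∑ i ∈ Finset.range (2 ^ n), α i • A n ^ i) *
        starTwo n (by omega) (∑ i ∈ Finset.range (2 ^ n), α i • A n ^ i)).coeff
        (Multiplicative.ofAdd ((2 ^ (n - 1) : ℕ) : ZMod (2 ^ n)))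
      = ∑ i ∈ (Finset.range (2 ^ n)).filter (fun i => Odd i), α i := by
  haveI : NeZero (2^n) := ⟨by positivity⟩
  constructor
  · have h0 : (1 : Cgrp n) = Multiplicative.ofAdd (0 : ZMod (2^n)) := rfl
    rw [h0, coeff_formula n hn α 0]
    rw [← Finset.sum_filter_add_sum_filter_not (Finset.range (2^n)) (fun j => Even j)]
    have he : ∑ j ∈ (Finset.range (2^n)).filter (fun j => Even j),
          α ((0 - cf n * (j : ZMod (2^n))).val) * α j
        = ∑ j ∈ (Finset.range (2^n)).filter (fun j => Even j), α j := by
      refine Finset.sum_congr rfl fun j hj => ?_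
      simp only [mem_filter, mem_range] at hj
      rw [val0_even n hn j hj.1 hj.2, zmod2_mul_self]
    have ho : ∑ j ∈ (Finset.range (2^n)).filter (fun j => ¬ Even j),
          α ((0 - cf n * (j : ZMod (2^n))).val) * α j = 0 := by
      rw [Finset.sum_congr rfl (fun j hj => by
        simp only [mem_filter, mem_range] at hj
        rw [val0_odd n hn j hj.1 (Nat.not_even_iff_odd.mp hj.2)])]
      exact cancel_sum n hn α (fun j => ¬ Even j)
        (fun j => not_congr (parity_pres n hn j))
    rw [he, ho, add_zero]
  · rw [coeff_formula n hn α (((2^(n-1):ℕ)) : ZMod (2^n))]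
    rw [← Finset.sum_filter_add_sum_filter_not (Finset.range (2^n)) (fun j => Even j)]
    have he : ∑ j ∈ (Finset.range (2^n)).filter (fun j => Even j),
          α (((((2^(n-1):ℕ)) : ZMod (2^n)) - cf n * (j : ZMod (2^n))).val) * α j = 0 := by
      rw [Finset.sum_congr rfl (fun j hj => by
        simp only [mem_filter, mem_range] at hj
        rw [valh_even n hn j hj.1 hj.2])]
      exact cancel_sum n hn α (fun j => Even j) (fun j => parity_pres n hn j)
    have ho : ∑ j ∈ (Finset.range (2^n)).filter (fun j => ¬ Even j),
          α (((((2^(n-1):ℕ)) : ZMod (2^n)) - cf n * (j : ZMod (2^n))).val) * α j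
        = ∑ i ∈ (Finset.range (2 ^ n)).filter (fun i => Odd i), α i := by
      rw [Finset.sum_congr rfl (fun j hj => by
        simp only [mem_filter, mem_range] at hj
        rw [valh_odd n hn j hj.1 (Nat.not_even_iff_odd.mp hj.2), zmod2_mul_self])]
      congr 1
      ext x
      simp [Nat.not_even_iff_odd]
    rw [he, ho, zero_add]


end
end

section
/- Let G be the generalized quaternion group Q_{2^{n+1}} = ⟨a, b | a^{2^n}=1, b²=a^{2^{n-1}}, bab^{-1}=a^{-1}⟩, n ≥ 2. Then V(F_2 G) contains no unit of order two of the form x₁ + x₂b with χ(x₁)=0 and χ(x₂)=1 (i.e., no unit of type 2 has order two). -/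
noncomputable section

/-- The cyclic subgroup `⟨a⟩` of the generalized quaternion group `Q_{2^(n+1)}`,
which has order `2 * 2^(n-1) = 2^n`. -/
abbrev CgrpQ (n : ℕ) : Type := Multiplicative (ZMod (2 * 2 ^ (n - 1)))

/-- The group algebra `F₂⟨a⟩`. -/
abbrev FCQ (n : ℕ) : Type := MonoidAlgebra (ZMod 2) (CgrpQ n)

/-- The augmentation map `χ : F₂⟨a⟩ → F₂`. -/
def augQ (n : ℕ) : FCQ n →ₐ[ZMod 2] ZMod 2 :=
  MonoidAlgebra.lift (ZMod 2) (ZMod 2) (CgrpQ n) 1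

/-- The embedding of `⟨a⟩` into the generalized quaternion group
`Q_{2^(n+1)} = QuaternionGroup (2^(n-1))`. -/
def aHom (n : ℕ) : CgrpQ n →* QuaternionGroup (2 ^ (n - 1)) where
  toFun i := QuaternionGroup.a i.toAdd
  map_one' := rfl
  map_mul' _ _ := rfl

/-- The embedding `F₂⟨a⟩ → F₂Q` of group algebras. -/
def iotaQ (n : ℕ) : FCQ n →+* MonoidAlgebra (ZMod 2) (QuaternionGroup (2 ^ (n - 1))) :=
  MonoidAlgebra.mapDomainRingHom (ZMod 2) (aHom n)

/-- The element `b` of the generalized quaternion group inside the group algebra `F₂Q`. -/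
def Bq (n : ℕ) : MonoidAlgebra (ZMod 2) (QuaternionGroup (2 ^ (n - 1))) :=
  MonoidAlgebra.of (ZMod 2) (QuaternionGroup (2 ^ (n - 1))) (QuaternionGroup.xa 0)

namespace Stmt14Aux

open MonoidAlgebra QuaternionGroup

/-- The inversion automorphism of the group algebra `F₂⟨a⟩`. -/
def sigmaQ (n : ℕ) : FCQ n →+* FCQ n :=
  MonoidAlgebra.mapDomainRingHom (ZMod 2) (invMonoidHom : CgrpQ n →* CgrpQ n)

lemma sigmaQ_apply (n : ℕ) (y : FCQ n) (g : CgrpQ n) : (sigmaQ n y).coeff g = y.coeff g⁻¹ := by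
  have h : Finsupp.mapDomain (fun g : CgrpQ n => g⁻¹) y.coeff ((g⁻¹)⁻¹) = y.coeff g⁻¹ :=
    Finsupp.mapDomain_apply inv_injective y.coeff g⁻¹
  rw [inv_inv] at h
  exact h

lemma sigmaQ_single (n : ℕ) (g : CgrpQ n) (c : ZMod 2) :
    sigmaQ n (MonoidAlgebra.single g c) = MonoidAlgebra.single g⁻¹ c := by
  simp [sigmaQ, invMonoidHom, Finsupp.mapDomain_single]

lemma aHom_injective (n : ℕ) : Function.Injective (aHom n) := by
  intro g h hgh
  have hgh' : QuaternionGroup.a (n := 2 ^ (n - 1)) g.toAdd = QuaternionGroup.a h.toAdd := hgh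
  simpa [ Multiplicative.toAdd.injective.eq_iff] using hgh'

lemma iotaQ_single (n : ℕ) (g : CgrpQ n) (c : ZMod 2) :
    iotaQ n (MonoidAlgebra.single g c) = MonoidAlgebra.single (QuaternionGroup.a g.toAdd) c := by
  simp [iotaQ, Finsupp.mapDomain_single, aHom]
  rfl

lemma iotaQ_apply_a (n : ℕ) (y : FCQ n) (i : ZMod (2 * 2 ^ (n - 1))) :
    (iotaQ n y).coeff (QuaternionGroup.a i) = y.coeff (Multiplicative.ofAdd i) := by
  have h := Finsupp.mapDomain_apply (aHom_injective n) y.coeff (Multiplicative.ofAdd i)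
  exact h

lemma iotaQ_apply_xa (n : ℕ) (y : FCQ n) (i : ZMod (2 * 2 ^ (n - 1))) :
    (iotaQ n y).coeff (QuaternionGroup.xa i) = 0 := by
  show Finsupp.mapDomain (aHom n) y.coeff _ = 0
  refine Finsupp.mapDomain_of_notMem_range _ _ ?_
  rintro ⟨g, hg⟩
  change QuaternionGroup.a _ = _ at hg
  simp at hg

lemma Bq_def (n : ℕ) : Bq n = MonoidAlgebra.single (QuaternionGroup.xa 0) 1 := rfl

lemma inv_xa_zero (n : ℕ) :
    (QuaternionGroup.xa 0 : QuaternionGroup (2 ^ (n - 1)))⁻¹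
      = QuaternionGroup.xa (((2 ^ (n - 1) : ℕ) : ZMod (2 * 2 ^ (n - 1))) + 0) := rfl

lemma hcomm (n : ℕ) (y : FCQ n) :
    Bq n * iotaQ n y = iotaQ n (sigmaQ n y) * Bq n := by
  induction y using MonoidAlgebra.induction_linear with
  | zero => simp
  | add f g hf hg => simp [map_add, mul_add, add_mul, hf, hg]
  | single g c =>
    rw [sigmaQ_single, iotaQ_single, iotaQ_single, Bq_def,
      MonoidAlgebra.single_mul_single, MonoidAlgebra.single_mul_single]
    simp

lemma hBB (n : ℕ) :
    Bq n * Bq n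
      = iotaQ n (MonoidAlgebra.single
          (Multiplicative.ofAdd ((2 ^ (n - 1) : ℕ) : ZMod (2 * 2 ^ (n - 1)))) 1) := by
  rw [Bq_def, MonoidAlgebra.single_mul_single, iotaQ_single]
  simp


lemma augQ_single (n : ℕ) (g : CgrpQ n) (c : ZMod 2) :
    augQ n (MonoidAlgebra.single g c) = c := by
  simp [augQ, MonoidAlgebra.lift_single]

lemma augQ_eq_sum (n : ℕ) [NeZero (2 * 2 ^ (n - 1))] (y : FCQ n) :
    augQ n y = ∑ g : CgrpQ n, y.coeff g := by
  have h : augQ n y = y.coeff.sum fun _ c => c := by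
    simp [augQ, MonoidAlgebra.lift_apply]
  rw [h]
  exact Finsupp.sum_fintype _ _ (fun _ => rfl)

lemma algebraMap_injective (n : ℕ) :
    Function.Injective (algebraMap (ZMod 2) (FCQ n)) := by
  intro a b h
  have := congrArg (fun z : FCQ n => z.coeff (1 : CgrpQ n)) h
  simpa [MonoidAlgebra.coe_algebraMap, Finsupp.single_eq_same] using this

lemma zmod2_pow (c : ZMod 2) (k : ℕ) : c ^ (k + 1) = c := by
  induction k with
  | zero => exact pow_one c
  | succ k ih =>
    have hsq : ∀ c : ZMod 2, c * c = c := by decide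
    rw [pow_succ, ih, hsq]

lemma cgrp_pow (n : ℕ) (hn : 1 ≤ n) (g : CgrpQ n) : g ^ (2 ^ n) = 1 := by
  have hm : 2 * 2 ^ (n - 1) = 2 ^ n := by
    conv_rhs => rw [show n = (n - 1) + 1 from (Nat.succ_pred_eq_of_pos (by omega)).symm]
    rw [pow_succ]; ring
  have h0 : ((2 ^ n : ℕ) : ZMod (2 * 2 ^ (n - 1))) = 0 := by
    rw [← hm]; exact ZMod.natCast_self _
  apply Multiplicative.toAdd.injective
  rw [toAdd_pow, toAdd_one, nsmul_eq_mul, h0, zero_mul]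

lemma pow_card (n : ℕ) (hn : 1 ≤ n) (y : FCQ n) :
    y ^ (2 ^ n) = MonoidAlgebra.single 1 (augQ n y) := by
  haveI : CharP (FCQ n) 2 := charP_of_injective_algebraMap (algebraMap_injective n) 2
  induction y using MonoidAlgebra.induction with
  | zero => simp [zero_pow (pow_ne_zero n two_ne_zero), map_zero]
  | single_add g c f hgf hc ih =>
    rw [add_pow_char_pow, ih,
      MonoidAlgebra.single_pow, cgrp_pow n hn g,
      show c ^ (2 ^ n) = c from by
        rw [show (2:ℕ) ^ n = (2 ^ n - 1) + 1 from
          (Nat.succ_pred_eq_of_pos (by positivity)).symm]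
        exact zmod2_pow c _,
      map_add,
      show augQ n (MonoidAlgebra.single g c) = c from augQ_single n g c,
      ← MonoidAlgebra.single_add]


def zAe (n : ℕ) : CgrpQ n :=
  Multiplicative.ofAdd (((2 : ℕ) ^ (n - 1) : ℕ) : ZMod (2 * 2 ^ (n - 1)))

def Zel (n : ℕ) : FCQ n := MonoidAlgebra.single (zAe n) 1

lemma zA_cast_add (n : ℕ) :
    ((2 ^ (n - 1) : ℕ) : ZMod (2 * 2 ^ (n - 1))) + ((2 ^ (n - 1) : ℕ) : ZMod (2 * 2 ^ (n - 1)))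
      = 0 := by
  rw [← Nat.cast_add, show 2 ^ (n - 1) + 2 ^ (n - 1) = 2 * 2 ^ (n - 1) by ring]
  exact ZMod.natCast_self _

lemma zA_mul_self (n : ℕ) : zAe n * zAe n = 1 := by
  apply Multiplicative.toAdd.injective
  simpa [zAe] using zA_cast_add n

lemma zA_ne_one (n : ℕ) [NeZero (2 * 2 ^ (n - 1))] : zAe n ≠ 1 := by
  intro h
  have h0 : ((2 ^ (n - 1) : ℕ) : ZMod (2 * 2 ^ (n - 1))) = 0 := by
    have := congrArg Multiplicative.toAdd h
    simpa [zAe] using this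
  rw [ZMod.natCast_eq_zero_iff] at h0
  have := Nat.le_of_dvd (by positivity) h0
  have h1 : (1:ℕ) ≤ 2 ^ (n - 1) := Nat.one_le_two_pow
  omega

lemma hBB' (n : ℕ) : Bq n * Bq n = iotaQ n (Zel n) := by
  rw [Zel, Bq_def, MonoidAlgebra.single_mul_single, iotaQ_single]
  simp [zAe]

lemma mulB_apply_a (n : ℕ) (v : FCQ n) (i : ZMod (2 * 2 ^ (n - 1))) :
    (iotaQ n v * Bq n).coeff (QuaternionGroup.a i) = 0 := by
  rw [Bq_def, MonoidAlgebra.mul_single_apply, inv_xa_zero, QuaternionGroup.a_mul_xa,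
    iotaQ_apply_xa, zero_mul]

lemma mulB_apply_xa (n : ℕ) (v : FCQ n) (i : ZMod (2 * 2 ^ (n - 1))) :
    (iotaQ n v * Bq n).coeff (QuaternionGroup.xa i) = v.coeff (Multiplicative.ofAdd (-i)) := by
  rw [Bq_def, MonoidAlgebra.mul_single_apply, inv_xa_zero, QuaternionGroup.xa_mul_xa]
  have he : ((2 ^ (n - 1) : ℕ) : ZMod (2 * 2 ^ (n - 1)))
      + (((2 ^ (n - 1) : ℕ) : ZMod (2 * 2 ^ (n - 1))) + 0) - i = -i := by
    rw [add_zero, zA_cast_add, zero_sub]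
  rw [he, iotaQ_apply_a, mul_one]

lemma MA_add_apply {G : Type*} [Monoid G] (p q : MonoidAlgebra (ZMod 2) G) (x : G) :
    (p + q).coeff x = p.coeff x + q.coeff x := Finsupp.add_apply p.coeff q.coeff x

lemma MA_one_apply {G : Type*} [Monoid G] : (1 : MonoidAlgebra (ZMod 2) G).coeff 1 = 1 := by
  rw [MonoidAlgebra.one_def]
  exact Finsupp.single_eq_same (a := (1 : G)) (b := (1 : ZMod 2))

lemma iotaQ_injective (n : ℕ) : Function.Injective (iotaQ n) := by
  have h : ∀ y : FCQ n, iotaQ n y = MonoidAlgebra.mapDomain (aHom n) y := fun _ => rfl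
  intro a b hab
  rw [h, h] at hab
  exact MonoidAlgebra.mapDomain_injective (aHom_injective n) hab

end Stmt14Aux

/-- In the group algebra over `F₂` of the generalized quaternion group `Q_{2^(n+1)}`, `n ≥ 2`,
there is no unit of order two of type 2, i.e. no element `x = x₁ + x₂b` with `χ(x₁) = 0`,
`χ(x₂) = 1` and `x² = 1`. -/
theorem stmt14 (n : ℕ) (hn : 2 ≤ n) :
    ¬ ∃ x₁ x₂ : FCQ n, augQ n x₁ = 0 ∧ augQ n x₂ = 1 ∧
        (iotaQ n x₁ + iotaQ n x₂ * Bq n) ^ 2 = 1 := by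
  classical
  rintro ⟨x₁, x₂, h1, h2, hsq⟩
  haveI : NeZero (2 * 2 ^ (n - 1)) := ⟨by positivity⟩
  haveI : CharP (FCQ n) 2 :=
    charP_of_injective_algebraMap (Stmt14Aux.algebraMap_injective n) 2
  have hn1 : 1 ≤ n := by omega
  set σ : FCQ n →+* FCQ n := Stmt14Aux.sigmaQ n with hσ
  -- Step 1: expand the square and split into the two cosets.
  have hCA : (iotaQ n x₂ * Bq n) * iotaQ n x₁ = iotaQ n (x₂ * σ x₁) * Bq n := by
    rw [mul_assoc, Stmt14Aux.hcomm, ← mul_assoc, ← map_mul]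
  have hCC : (iotaQ n x₂ * Bq n) * (iotaQ n x₂ * Bq n)
      = iotaQ n (x₂ * σ x₂ * Stmt14Aux.Zel n) := by
    rw [mul_assoc, ← mul_assoc (Bq n), Stmt14Aux.hcomm, mul_assoc, Stmt14Aux.hBB',
      ← map_mul, ← map_mul]
    congr 1
    ring
  have hE : iotaQ n (x₁ * x₁ + x₂ * σ x₂ * Stmt14Aux.Zel n)
      + iotaQ n (x₁ * x₂ + x₂ * σ x₁) * Bq n = 1 := by
    rw [← hsq, sq, add_mul, mul_add, mul_add, hCA, hCC, map_add, map_add,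
      map_mul (iotaQ n) x₁ x₂, map_mul (iotaQ n) x₂ (σ x₁), map_mul (iotaQ n) x₁ x₁, add_mul]
    simp only [mul_assoc]
    abel
  -- Step 2: extract the xa-component.
  have hv : x₁ * x₂ + x₂ * σ x₁ = 0 := by
    refine MonoidAlgebra.ext (Finsupp.ext fun g => ?_)
    have h := congrArg
      (fun z : MonoidAlgebra (ZMod 2) (QuaternionGroup (2 ^ (n - 1))) =>
        z.coeff (QuaternionGroup.xa (-g.toAdd))) hE
    rw [Stmt14Aux.MA_add_apply, Stmt14Aux.iotaQ_apply_xa,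
      Stmt14Aux.mulB_apply_xa, zero_add, neg_neg, ofAdd_toAdd] at h
    have hone : (1 : MonoidAlgebra (ZMod 2) (QuaternionGroup (2 ^ (n - 1)))).coeff
        (QuaternionGroup.xa (-g.toAdd)) = 0 := by
      rw [MonoidAlgebra.one_def]
      exact Finsupp.single_eq_of_ne (by simp [QuaternionGroup.one_def, -QuaternionGroup.a_zero])
    rw [hone] at h
    exact h
  -- Step 3: extract the a-component.
  have hu : x₁ * x₁ + x₂ * σ x₂ * Stmt14Aux.Zel n = 1 := by
    apply Stmt14Aux.iotaQ_injective n
    rw [map_one]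
    rw [hv, map_zero, zero_mul, add_zero] at hE
    exact hE
  -- Step 4: `x₂` is invertible, hence `σ x₁ = x₁`.
  have hx2 : x₂ * x₂ ^ (2 ^ n - 1) = 1 := by
    rw [← pow_succ', show 2 ^ n - 1 + 1 = 2 ^ n from Nat.succ_pred_eq_of_pos (pow_pos (by norm_num) n),
      Stmt14Aux.pow_card n hn1 x₂, h2, ← MonoidAlgebra.one_def]
  have hsum : x₁ + σ x₁ = 0 := by
    have h3 := congrArg (· * x₂ ^ (2 ^ n - 1)) hv
    simp only [zero_mul] at h3
    calc x₁ + σ x₁ = x₁ * (x₂ * x₂ ^ (2 ^ n - 1)) + σ x₁ * (x₂ * x₂ ^ (2 ^ n - 1)) := by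
          rw [hx2, mul_one, mul_one]
      _ = (x₁ * x₂ + x₂ * σ x₁) * x₂ ^ (2 ^ n - 1) := by ring
      _ = 0 := h3
  have hfix : σ x₁ = x₁ := by
    have hch : x₁ + x₁ = 0 := CharTwo.add_self_eq_zero x₁
    linear_combination hsum - hch
  have hptw : ∀ g : CgrpQ n, x₁.coeff g⁻¹ = x₁.coeff g := fun g => by
    rw [← Stmt14Aux.sigmaQ_apply n x₁ g]
    exact congrArg (fun z : FCQ n => z.coeff g) hfix
  -- Step 5: evaluate the a-component equation at the identity.
  have key1 : (x₁ * x₁).coeff (1 : CgrpQ n) = 0 := by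
    rw [MonoidAlgebra.mul_apply_left, Finsupp.sum_fintype _ _ (fun _ => by simp)]
    have : ∀ g : CgrpQ n, x₁.coeff g * x₁.coeff (g⁻¹ * 1) = x₁.coeff g := by
      intro g
      rw [mul_one, hptw g]
      have hsq2 : ∀ c : ZMod 2, c * c = c := by decide
      exact hsq2 _
    rw [Finset.sum_congr rfl (fun g _ => this g), ← Stmt14Aux.augQ_eq_sum, h1]
  have key2 : (x₂ * (σ x₂ * Stmt14Aux.Zel n)).coeff (1 : CgrpQ n) = 0 := by
    have hq : ∀ y : CgrpQ n, (σ x₂ * Stmt14Aux.Zel n).coeff y = x₂.coeff (Stmt14Aux.zAe n * y⁻¹) := by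
      intro y
      rw [Stmt14Aux.Zel, MonoidAlgebra.mul_single_apply, mul_one,
        Stmt14Aux.sigmaQ_apply, mul_inv_rev, inv_inv]
    rw [MonoidAlgebra.mul_apply_left, Finsupp.sum_fintype _ _ (fun _ => by simp)]
    have hterm : ∀ g : CgrpQ n, x₂.coeff g * (σ x₂ * Stmt14Aux.Zel n).coeff (g⁻¹ * 1)
        = x₂.coeff g * x₂.coeff (Stmt14Aux.zAe n * g) := by
      intro g
      rw [mul_one, hq, inv_inv]
    rw [Finset.sum_congr rfl (fun g _ => hterm g)]
    refine Finset.sum_ninvolution (fun g => Stmt14Aux.zAe n * g) ?_ ?_ (fun _ => Finset.mem_univ _) ?_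
    · intro g
      show x₂.coeff g * x₂.coeff (Stmt14Aux.zAe n * g)
          + x₂.coeff (Stmt14Aux.zAe n * g) * x₂.coeff (Stmt14Aux.zAe n * (Stmt14Aux.zAe n * g)) = 0
      rw [← mul_assoc, Stmt14Aux.zA_mul_self, one_mul, mul_comm (x₂.coeff (Stmt14Aux.zAe n * g))]
      exact CharTwo.add_self_eq_zero _
    · intro g _ heq
      exact Stmt14Aux.zA_ne_one n (mul_eq_right.mp heq)
    · intro g
      show Stmt14Aux.zAe n * (Stmt14Aux.zAe n * g) = g
      rw [← mul_assoc, Stmt14Aux.zA_mul_self, one_mul]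
  have hfin := congrArg (fun z : FCQ n => z.coeff (1 : CgrpQ n)) hu
  rw [Stmt14Aux.MA_add_apply, key1, mul_assoc, key2, Stmt14Aux.MA_one_apply] at hfin
  simp at hfin


end
end
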